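/- arXiv:1102.0630 — 2 statements merged into one kernel-verified Lean document; each statement's English description precedes it below -/
import Mathlib

section
/- The complex Zernike polynomials satisfy the orthogonality relation ∬_D V_{pq}(x,y) V*_{p'q'}(x,y) dx dy = (π/(p+1)) δ_{pp'} δ_{qq'} for admissible index pairs (p,q), (p',q'). -/
open MeasureTheory Complex Real

noncomputable section

def Disc : Set ℂ := Metric.closedBall 0 1

def muD : Measure ℂ := volume.restrict Disc

def reflPt (β : ℝ) (z : ℂ) : ℂ := Complex.exp (2 * β * Complex.I) * (starRingEnd ℂ) z

def reflFun (β : ℝ) (f : ℂ → ℂ) : ℂ → ℂ := fun z => f (reflPt β z)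

def Rz (p : ℕ) (q : ℤ) (ρ : ℝ) : ℝ :=
  ∑ l ∈ Finset.range ((p - q.natAbs) / 2 + 1),
    (-1 : ℝ) ^ l * (Nat.factorial (p - l)) * ρ ^ (p - 2 * l) /
      ((Nat.factorial l) * (Nat.factorial ((p + q.natAbs) / 2 - l)) *
        (Nat.factorial ((p - q.natAbs) / 2 - l)))

def Vz (p : ℕ) (q : ℤ) (z : ℂ) : ℂ :=
  (Rz p q ‖z‖ : ℂ) * Complex.exp ((q : ℂ) * (Complex.arg z) * Complex.I)

def Zmom (p : ℕ) (q : ℤ) (f : ℂ → ℂ) : ℂ :=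
  ∫ z in Disc, f z * (starRingEnd ℂ) (Vz p q z)

def Admissible (p : ℕ) (q : ℤ) : Prop := q.natAbs ≤ p ∧ (p - q.natAbs) % 2 = 0


open Finset Polynomial intervalIntegral

lemma sum_alt_succ (n : ℕ) (f : ℕ → ℝ) :
    ∑ l ∈ range (n+2), (-1:ℝ)^l * (n+1).choose l * f l
      = ∑ l ∈ range (n+1), (-1:ℝ)^l * n.choose l * (f l - f (l+1)) := by
  have h1 : ∑ l ∈ range (n+2), (-1:ℝ)^l * (n+1).choose l * f l
      = ∑ l ∈ range (n+1), (-1:ℝ)^(l+1) * ((n+1).choose (l+1)) * f (l+1)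
        + (-1:ℝ)^0 * ((n+1).choose 0) * f 0 := Finset.sum_range_succ' _ _
  have h2 : ∑ l ∈ range (n+1), (-1:ℝ)^l * n.choose l * f l
      = ∑ l ∈ range n, (-1:ℝ)^(l+1) * (n.choose (l+1)) * f (l+1)
        + (-1:ℝ)^0 * (n.choose 0) * f 0 := Finset.sum_range_succ' _ _
  have h3 : ∀ l, ((n+1).choose (l+1) : ℝ) = n.choose l + n.choose (l+1) := by
    intro l; rw [Nat.choose_succ_succ]; push_cast; ring
  rw [h1]
  simp only [h3]
  rw [Finset.sum_congr rfl (fun l _ => by ring :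
    ∀ l ∈ range (n+1), (-1:ℝ)^(l+1) * ((n.choose l : ℝ) + n.choose (l+1)) * f (l+1)
      = -((-1:ℝ)^l * n.choose l * f (l+1)) + (-1:ℝ)^(l+1) * (n.choose (l+1)) * f (l+1))]
  rw [Finset.sum_add_distrib]
  have h4 : ∑ l ∈ range (n+1), (-1:ℝ)^(l+1) * (n.choose (l+1)) * f (l+1)
      = ∑ l ∈ range n, (-1:ℝ)^(l+1) * (n.choose (l+1)) * f (l+1) := by
    rw [Finset.sum_range_succ, Nat.choose_succ_self]; simp
  rw [h4, Finset.sum_neg_distrib]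
  rw [Finset.sum_congr rfl (fun l _ => by ring :
    ∀ l ∈ range (n+1), (-1:ℝ)^l * n.choose l * (f l - f (l+1))
      = (-1:ℝ)^l * n.choose l * f l - (-1:ℝ)^l * n.choose l * f (l+1))]
  rw [Finset.sum_sub_distrib, h2]
  simp; ring

lemma alt_sum_poly (n : ℕ) (P : ℝ[X]) (hP : P.degree < n) :
    ∑ l ∈ range (n+1), (-1:ℝ)^l * n.choose l * P.eval (l:ℝ) = 0 := by
  induction n generalizing P with
  | zero =>
    have h0 : P = 0 := by simpa using hP
    simp [h0]
  | succ n ih =>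
    rcases eq_or_ne P 0 with rfl | hP0
    · simp
    rw [sum_alt_succ n (fun l => P.eval (l:ℝ))]
    have key : ∀ l : ℕ, P.eval (l:ℝ) - P.eval ((l+1:ℕ):ℝ)
        = (P - P.comp (X + C 1)).eval (l:ℝ) := by
      intro l; simp [Polynomial.eval_comp]
    calc ∑ l ∈ range (n+1), (-1:ℝ)^l * n.choose l * (P.eval (l:ℝ) - P.eval ((l+1:ℕ):ℝ))
        = ∑ l ∈ range (n+1), (-1:ℝ)^l * n.choose l * ((P - P.comp (X + C 1)).eval (l:ℝ)) := by
          exact Finset.sum_congr rfl fun l _ => by rw [key l]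
      _ = 0 := by
          apply ih
          rcases eq_or_ne (P - P.comp (X + C 1)) 0 with h0 | h0
          · rw [h0, Polynomial.degree_zero]; exact WithBot.bot_lt_coe n
          have hlc : (P.comp (X + C 1)).leadingCoeff = P.leadingCoeff := by
            rw [Polynomial.leadingCoeff_comp
              (by rw [Polynomial.natDegree_X_add_C]; norm_num),
              Polynomial.leadingCoeff_X_add_C, one_pow, mul_one]
          have hc0 : P.comp (X + C 1) ≠ 0 :=
            Polynomial.leadingCoeff_ne_zero.mp
              (hlc ▸ Polynomial.leadingCoeff_ne_zero.mpr hP0)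
          have hdeg : (P.comp (X + C 1)).degree = P.degree := by
            rw [Polynomial.degree_eq_natDegree hc0, Polynomial.degree_eq_natDegree hP0,
              ← Polynomial.taylor_apply, Polynomial.natDegree_taylor]
          have h1 := Polynomial.degree_sub_lt hdeg.symm hP0 hlc.symm
          have h2 : P.degree ≤ n := by
            exact Order.le_of_lt_succ (by exact_mod_cast hP)
          exact lt_of_lt_of_le h1 h2

lemma beta_sum (n : ℕ) (x : ℝ) (hx : ∀ j : ℕ, j ≤ n → x + j ≠ 0) :
    ∑ l ∈ range (n+1), (-1:ℝ)^l * n.choose l * (x + l)⁻¹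
      = n.factorial / ∏ j ∈ range (n+1), (x + j) := by
  induction n generalizing x with
  | zero =>
    norm_num [Finset.sum_range_one, Finset.prod_range_one]
  | succ n ih =>
    have hx' : ∀ j : ℕ, j ≤ n → x + j ≠ 0 := fun j hj => hx j (hj.trans (Nat.le_succ n))
    have hx1 : ∀ j : ℕ, j ≤ n → (x + 1) + j ≠ 0 := fun j hj h0 =>
      hx (j+1) (by omega) (by push_cast; linarith)
    rw [sum_alt_succ n (fun l => (x + l)⁻¹)]
    have split : ∑ l ∈ range (n+1), (-1:ℝ)^l * n.choose l * ((x + l)⁻¹ - (x + (l+1:ℕ))⁻¹)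
        = (∑ l ∈ range (n+1), (-1:ℝ)^l * n.choose l * (x + l)⁻¹)
          - ∑ l ∈ range (n+1), (-1:ℝ)^l * n.choose l * ((x+1) + l)⁻¹ := by
      rw [← Finset.sum_sub_distrib]
      refine Finset.sum_congr rfl fun l _ => ?_
      have : x + ((l:ℝ)+1) = (x+1) + l := by ring
      push_cast
      rw [this]; ring
    rw [split, ih x hx', ih (x+1) hx1]
    set Pn : ℝ := ∏ j ∈ range (n+1), (x + j) with hPn
    set Pn' : ℝ := ∏ j ∈ range (n+1), ((x+1) + j) with hPn'
    set A : ℝ := ∏ j ∈ range (n+2), (x + j) with hA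
    have hA1 : A = Pn * (x + ((n:ℝ)+1)) := by
      rw [hA, hPn, Finset.prod_range_succ, Nat.cast_add, Nat.cast_one]
    have hA2 : A = (x + 0) * Pn' := by
      rw [hA, hPn', Finset.prod_range_succ', Nat.cast_zero, mul_comm]
      congr 1
      exact Finset.prod_congr rfl fun j _ => by push_cast; ring
    have hxn1 : x + ((n:ℝ)+1) ≠ 0 := fun h0 =>
      hx (n+1) le_rfl (by push_cast; linarith)
    have hx0 : x + 0 ≠ 0 := by simpa using hx 0 (by omega)
    have e1 : (n.factorial : ℝ)/Pn = n.factorial * (x + ((n:ℝ)+1)) / A := by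
      rw [hA1]
      rw [mul_div_mul_right _ _ hxn1]
    have e2 : (n.factorial : ℝ)/Pn' = n.factorial * (x + 0) / A := by
      rw [hA2, mul_comm (x+0) Pn', mul_div_mul_right _ _ hx0]
    rw [e1, e2, div_sub_div_same]
    congr 1
    rw [Nat.factorial_succ]
    push_cast; ring

lemma prod_succ_eq_factorial (n : ℕ) : ∏ j ∈ range n, ((j:ℝ)+1) = n.factorial := by
  induction n with
  | zero => simp
  | succ n ih => rw [Finset.prod_range_succ, ih, Nat.factorial_succ]; push_cast; ring

lemma fact_ratio (a b : ℕ) :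
    (((a+b).factorial : ℝ)) = a.factorial * ∏ j ∈ range b, ((a:ℝ)+j+1) := by
  induction b with
  | zero => simp
  | succ b ih =>
    rw [Finset.prod_range_succ, ← mul_assoc, ← ih, show a+(b+1) = (a+b)+1 by ring,
      Nat.factorial_succ]
    push_cast; ring

lemma key_sum (n m s : ℕ) (hs : s ≤ n) :
    ∑ l ∈ range (n+1), (-1:ℝ)^l * n.choose l *
        (∏ j ∈ range n, ((n:ℝ)+m+j+1 - l)) / ((n:ℝ)+m+s+1 - l)
      = if s = n then (n.factorial:ℝ)^2 * (n+m).factorial / (2*n+m+1).factorial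
        else 0 := by
  set D : ℝ := (n:ℝ)+m+s+1 with hD
  set P : ℝ[X] := ∏ j ∈ range n, (C ((n:ℝ)+m+j+1) - X) with hP
  have hAl : ∀ l : ℝ, P.eval l = ∏ j ∈ range n, ((n:ℝ)+m+j+1 - l) := by
    intro l; rw [hP, Polynomial.eval_prod]; simp
  have hDl : ∀ l : ℕ, l ≤ n → D - l ≠ 0 := by
    intro l hl
    have : (l:ℝ) ≤ n := by exact_mod_cast hl
    have : (0:ℝ) < D - l := by rw [hD]; push_cast; linarith
    linarith
  obtain ⟨Q, hQ⟩ := Polynomial.X_sub_C_dvd_sub_C_eval (a := D) (p := P)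
  have hterm : ∀ l : ℕ, l ∈ range (n+1) →
      (-1:ℝ)^l * n.choose l * (∏ j ∈ range n, ((n:ℝ)+m+j+1 - l)) / (D - l)
      = P.eval D * ((-1:ℝ)^l * n.choose l * (D - (l:ℝ))⁻¹)
        - (-1:ℝ)^l * n.choose l * Q.eval (l:ℝ) := by
    intro l hl
    have hl' : l ≤ n := by simpa [Nat.lt_succ_iff] using hl
    have hne := hDl l hl'
    have h := congrArg (Polynomial.eval (l:ℝ)) hQ
    simp only [Polynomial.eval_sub, Polynomial.eval_C, Polynomial.eval_mul,
      Polynomial.eval_X] at h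
    rw [← hAl]
    field_simp
    linear_combination (n.choose l : ℝ) * h
  rw [Finset.sum_congr rfl hterm, Finset.sum_sub_distrib, ← Finset.mul_sum]
  have hQ0 : ∑ l ∈ range (n+1), (-1:ℝ)^l * n.choose l * Q.eval (l:ℝ) = 0 := by
    rcases eq_or_ne Q 0 with rfl | hQne
    · simp
    apply alt_sum_poly
    have hdegP : P.degree ≤ n := by
      rw [hP]
      refine le_trans (Polynomial.degree_prod_le _ _) ?_
      refine le_trans (Finset.sum_le_card_nsmul _ _ 1 ?_) ?_
      · intro j _
        exact le_trans (Polynomial.degree_sub_le _ _)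
          (max_le (le_trans Polynomial.degree_C_le (by norm_num)) Polynomial.degree_X_le)
      · simp [Finset.card_range]
    have hdegRHS : (P - C (P.eval D)).degree ≤ n :=
      le_trans (Polynomial.degree_sub_le _ _) (max_le hdegP
        (le_trans Polynomial.degree_C_le (by exact_mod_cast Nat.cast_nonneg' n)))
    rw [hQ, Polynomial.degree_mul, Polynomial.degree_X_sub_C] at hdegRHS
    rw [Polynomial.degree_eq_natDegree hQne] at hdegRHS ⊢
    have : (1 + Q.natDegree : ℕ) ≤ n := by exact_mod_cast hdegRHS
    exact_mod_cast Nat.lt_of_lt_of_le (Nat.lt_one_add_iff.mpr le_rfl) (by omega)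
  rw [hQ0, sub_zero]
  rcases lt_or_eq_of_le hs with hlt | hsn
  · rw [if_neg (by omega)]
    have : P.eval D = 0 := by
      rw [hAl]
      refine Finset.prod_eq_zero (Finset.mem_range.mpr hlt) ?_
      rw [hD]; push_cast; ring
    rw [this, zero_mul]
  · subst hsn
    rw [if_pos rfl]
    have hfac : ∏ j ∈ range s, ((s:ℝ) - j) = s.factorial := by
      rw [← prod_succ_eq_factorial s, ← Finset.prod_range_reflect (fun j => (j:ℝ)+1) s]
      refine Finset.prod_congr rfl fun j hj => ?_
      have hj' : j < s := Finset.mem_range.mp hj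
      rw [Nat.cast_sub (by omega : j ≤ s - 1), Nat.cast_sub (by omega : 1 ≤ s)]
      push_cast; ring
    have hPD : P.eval D = (-1:ℝ)^s * s.factorial := by
      rw [hAl]
      calc ∏ j ∈ range s, ((s:ℝ)+m+j+1 - D)
          = ∏ j ∈ range s, ((-1) * ((s:ℝ) - j)) := by
            refine Finset.prod_congr rfl fun j _ => by rw [hD]; push_cast; ring
        _ = (-1:ℝ)^s * ∏ j ∈ range s, ((s:ℝ) - j) := by
            rw [Finset.prod_mul_distrib, Finset.prod_const, Finset.card_range]
        _ = (-1:ℝ)^s * s.factorial := by rw [hfac]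
    set x : ℝ := (s:ℝ)+m+1 with hx
    have hxj : ∀ j : ℕ, j ≤ s → x + j ≠ 0 := by
      intro j _
      have : (0:ℝ) ≤ (s:ℝ) := Nat.cast_nonneg s
      have : (0:ℝ) ≤ (m:ℝ) := Nat.cast_nonneg m
      have : (0:ℝ) ≤ (j:ℝ) := Nat.cast_nonneg j
      rw [hx]; positivity
    have hrefl : ∑ l ∈ range (s+1), (-1:ℝ)^l * s.choose l * (D - l)⁻¹
        = (-1:ℝ)^s * ∑ l ∈ range (s+1), (-1:ℝ)^l * s.choose l * (x + l)⁻¹ := by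
      rw [← Finset.sum_range_reflect (fun l => (-1:ℝ)^l * s.choose l * (D - l)⁻¹) (s+1),
        Finset.mul_sum]
      refine Finset.sum_congr rfl fun l hl => ?_
      have hl' : l ≤ s := by simpa [Nat.lt_succ_iff] using hl
      simp only [Nat.add_sub_cancel]
      have e1 : (-1:ℝ)^(s-l) = (-1)^s * (-1)^l := by
        have h2 : (-1:ℝ)^(s-l) * (-1)^l = (-1)^s := by
          rw [← pow_add, Nat.sub_add_cancel hl']
        have h3 : (-1:ℝ)^l * (-1)^l = 1 := by
          rw [← pow_add]; exact Even.neg_one_pow ⟨l, rfl⟩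
        calc (-1:ℝ)^(s-l) = (-1)^(s-l) * ((-1)^l * (-1)^l) := by rw [h3, mul_one]
          _ = (-1)^s * (-1)^l := by rw [← mul_assoc, h2]
      have e2 : (s.choose (s-l) : ℝ) = s.choose l := by
        rw [Nat.choose_symm hl']
      have e3 : D - ((s-l : ℕ):ℝ) = x + l := by
        rw [hD, hx, Nat.cast_sub hl']; ring
      rw [e1, e2, e3]; ring
    rw [hrefl, beta_sum s x hxj]
    have hprod : ∏ j ∈ range (s+1), (x + (j:ℝ)) = ∏ j ∈ range (s+1), (((s+m:ℕ):ℝ) + (j:ℝ) + 1) := by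
      refine Finset.prod_congr rfl fun j _ => by rw [hx]; push_cast; ring
    have hfr : (((2*s+m+1).factorial : ℝ)) = (s+m).factorial * ∏ j ∈ range (s+1), (x + (j:ℝ)) := by
      rw [hprod, ← fact_ratio (s+m) (s+1), show (s+m)+(s+1) = 2*s+m+1 by omega]
    have hprodne : (∏ j ∈ range (s+1), (x + j)) ≠ 0 :=
      Finset.prod_ne_zero_iff.mpr fun j hj => hxj j (by simpa [Nat.lt_succ_iff] using hj)
    have hfacne : ((s+m).factorial : ℝ) ≠ 0 := Nat.cast_ne_zero.mpr (Nat.factorial_ne_zero _)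
    rw [hPD, hfr]
    have h4 : ((-1:ℝ)^s) * ((-1)^s) = 1 := by
      rw [← pow_add]; exact Even.neg_one_pow ⟨s, rfl⟩
    field_simp
    linear_combination h4

noncomputable def Zc (n m l : ℕ) : ℝ :=
  (-1)^l * ((2*n+m-l).factorial : ℝ) /
    (l.factorial * (n+m-l).factorial * (n-l).factorial)

noncomputable def RS (n m : ℕ) (ρ : ℝ) : ℝ :=
  ∑ l ∈ range (n+1), Zc n m l * ρ^(2*(n-l)+m)

lemma RS_def (n m : ℕ) (ρ : ℝ) :
    RS n m ρ = ∑ l ∈ range (n+1), Zc n m l * ρ^(2*(n-l)+m) := rfl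

lemma RS_cont (n m : ℕ) : Continuous (RS n m) := by
  unfold RS; exact continuous_finset_sum _ fun l _ => continuous_const.mul (continuous_pow _)

lemma moment_RS (n m s : ℕ) (hs : s ≤ n) :
    ∫ ρ in (0:ℝ)..1, RS n m ρ * ρ^(m+2*s+1)
      = if s = n then (n.factorial:ℝ) * (n+m).factorial / (2*((2*n+m+1).factorial))
        else 0 := by
  have expand : (fun ρ : ℝ => RS n m ρ * ρ^(m+2*s+1))
      = fun ρ => ∑ l ∈ range (n+1), Zc n m l * ρ^((2*(n-l)+m)+(m+2*s+1)) := by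
    funext ρ
    rw [RS_def, Finset.sum_mul]
    exact Finset.sum_congr rfl fun l _ => by rw [mul_assoc, ← pow_add]
  rw [expand, intervalIntegral.integral_finset_sum (fun l _ =>
    ((show Continuous fun ρ : ℝ =>
      Zc n m l * ρ^((2*(n-l)+m)+(m+2*s+1)) from continuous_const.mul (continuous_pow _)).intervalIntegrable 0 1))]
  have hterm : ∀ l ∈ range (n+1),
      ∫ ρ in (0:ℝ)..1, Zc n m l * ρ^((2*(n-l)+m)+(m+2*s+1))
        = (2*(n.factorial:ℝ))⁻¹ * ((-1:ℝ)^l * n.choose l *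
            (∏ j ∈ range n, ((n:ℝ)+m+j+1 - l)) / ((n:ℝ)+m+s+1 - l)) := by
    intro l hl
    have hl' : l ≤ n := by simpa [Nat.lt_succ_iff] using hl
    rw [intervalIntegral.integral_const_mul, integral_pow]
    have hcast : ((((2*(n-l)+m)+(m+2*s+1)) : ℕ) + 1 : ℝ) = 2*((n:ℝ)+m+s+1 - l) := by
      push_cast [Nat.cast_sub hl']; ring
    rw [one_pow, zero_pow (by omega), sub_zero, hcast]
    have hfact : ((2*n+m-l).factorial:ℝ)
        = (n+m-l).factorial * ∏ j ∈ range n, ((n:ℝ)+m+j+1 - l) := by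
      have h1 := fact_ratio (n+m-l) n
      rw [show (n+m-l)+n = 2*n+m-l by omega] at h1
      rw [h1]
      congr 1
      refine Finset.prod_congr rfl fun j _ => ?_
      push_cast [Nat.cast_sub (by omega : l ≤ n+m)]; ring
    have hchoose : (n.choose l : ℝ) = n.factorial / (l.factorial * (n-l).factorial) :=
      Nat.cast_choose ℝ hl'
    have hD : ((n:ℝ)+m+s+1 - l) ≠ 0 := by
      have : (l:ℝ) ≤ n := by exact_mod_cast hl'
      have h0 : (0:ℝ) ≤ (m:ℝ) := Nat.cast_nonneg m
      have h1 : (0:ℝ) ≤ (s:ℝ) := Nat.cast_nonneg s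
      nlinarith
    rw [Zc, hfact, hchoose]
    have hlne : (l.factorial : ℝ) ≠ 0 := Nat.cast_ne_zero.mpr (Nat.factorial_ne_zero _)
    have hnm : ((n+m-l).factorial : ℝ) ≠ 0 := Nat.cast_ne_zero.mpr (Nat.factorial_ne_zero _)
    have hnl : ((n-l).factorial : ℝ) ≠ 0 := Nat.cast_ne_zero.mpr (Nat.factorial_ne_zero _)
    have hnf : (n.factorial : ℝ) ≠ 0 := Nat.cast_ne_zero.mpr (Nat.factorial_ne_zero _)
    field_simp
  rw [Finset.sum_congr rfl hterm, ← Finset.mul_sum, key_sum n m s hs]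
  have hnf : (n.factorial : ℝ) ≠ 0 := Nat.cast_ne_zero.mpr (Nat.factorial_ne_zero _)
  have hff : ((2*n+m+1).factorial : ℝ) ≠ 0 := Nat.cast_ne_zero.mpr (Nat.factorial_ne_zero _)
  split_ifs
  · field_simp
  · rw [mul_zero]

lemma radial_RS (n n' m : ℕ) (h : n' ≤ n) :
    ∫ ρ in (0:ℝ)..1, RS n m ρ * RS n' m ρ * ρ
      = if n = n' then 1/(2*(2*(n:ℝ)+m+1)) else 0 := by
  have expand : (fun ρ : ℝ => RS n m ρ * RS n' m ρ * ρ)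
      = fun ρ => ∑ l' ∈ range (n'+1), Zc n' m l' * (RS n m ρ * ρ^(m+2*(n'-l')+1)) := by
    funext ρ
    rw [RS_def n' m, Finset.mul_sum, Finset.sum_mul]
    refine Finset.sum_congr rfl fun l' _ => ?_
    rw [show m+2*(n'-l')+1 = (2*(n'-l')+m)+1 by ring, pow_succ]
    ring
  rw [expand, intervalIntegral.integral_finset_sum (fun l _ =>
    ((show Continuous fun ρ : ℝ =>
      Zc n' m l * (RS n m ρ * ρ^(m+2*(n'-l)+1)) from continuous_const.mul ((RS_cont n m).mul (continuous_pow _))).intervalIntegrable 0 1))]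
  have hterm : ∀ l' ∈ range (n'+1),
      ∫ ρ in (0:ℝ)..1, Zc n' m l' * (RS n m ρ * ρ^(m+2*(n'-l')+1))
        = Zc n' m l' * (if n'-l' = n then
            (n.factorial:ℝ) * (n+m).factorial / (2*((2*n+m+1).factorial)) else 0) := by
    intro l' _
    rw [intervalIntegral.integral_const_mul, moment_RS n m (n'-l') (le_trans (Nat.sub_le _ _) h)]
  rw [Finset.sum_congr rfl hterm]
  rcases lt_or_eq_of_le h with hlt | hEq
  · rw [if_neg (by omega)]
    refine Finset.sum_eq_zero fun l' hl' => ?_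
    rw [if_neg (by have := Finset.mem_range.mp hl'; omega), mul_zero]
  · subst hEq
    rw [if_pos rfl]
    rw [Finset.sum_eq_single_of_mem 0 (Finset.mem_range.mpr (by omega))
      (fun l' hl' hne => by
        rw [if_neg (by have := Finset.mem_range.mp hl'; omega), mul_zero])]
    rw [if_pos (by omega), Zc]
    have e1 : (2*n'+m+1).factorial = (2*n'+m+1) * (2*n'+m).factorial := rfl
    rw [e1]
    have h1 : ((2*n'+m).factorial : ℝ) ≠ 0 := Nat.cast_ne_zero.mpr (Nat.factorial_ne_zero _)
    have h2 : ((n'+m).factorial : ℝ) ≠ 0 := Nat.cast_ne_zero.mpr (Nat.factorial_ne_zero _)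
    have h3 : (n'.factorial : ℝ) ≠ 0 := Nat.cast_ne_zero.mpr (Nat.factorial_ne_zero _)
    have h4 : ((2*n'+m+1 : ℕ) : ℝ) ≠ 0 := by positivity
    simp only [Nat.sub_zero, pow_zero, Nat.factorial_zero, Nat.cast_one, one_mul]
    push_cast
    field_simp

lemma angular (k : ℤ) :
    ∫ θ in Set.Ioo (-π) π, Complex.exp (k * θ * Complex.I)
      = if k = 0 then ((2*π : ℝ) : ℂ) else 0 := by
  rw [← MeasureTheory.integral_Ioc_eq_integral_Ioo,
    ← intervalIntegral.integral_of_le (by linarith [Real.pi_pos] : -π ≤ π)]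
  rcases eq_or_ne k 0 with rfl | hk
  · simp only [Int.cast_zero, zero_mul, Complex.exp_zero, if_pos rfl]
    rw [intervalIntegral.integral_const]
    rw [sub_neg_eq_add, Complex.real_smul]
    push_cast
    ring
  · rw [if_neg hk]
    have hc : ((k:ℂ) * Complex.I) ≠ 0 :=
      mul_ne_zero (Int.cast_ne_zero.mpr hk) Complex.I_ne_zero
    have hcong : ∀ θ ∈ Set.uIcc (-π) π,
        Complex.exp ((k:ℂ) * (θ:ℝ) * Complex.I) = Complex.exp (((k:ℂ) * Complex.I) * θ) := by
      intro θ _; ring_nf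
    rw [intervalIntegral.integral_congr hcong, integral_exp_mul_complex hc]
    have e1 : ((k:ℂ) * Complex.I) * (π:ℂ) = k * ((π:ℝ) * Complex.I) := by push_cast; ring
    have e2 : ((k:ℂ) * Complex.I) * ((-π : ℝ):ℂ) = k * (-(((π:ℝ)) * Complex.I)) := by
      push_cast; ring
    rw [e1, e2, Complex.exp_int_mul, Complex.exp_int_mul, Complex.exp_neg,
      Complex.exp_pi_mul_I]
    norm_num

lemma Rz_eq_RS (p : ℕ) (q : ℤ) (h : Admissible p q) (ρ : ℝ) :
    Rz p q ρ = RS ((p - q.natAbs)/2) q.natAbs ρ := by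
  obtain ⟨h1, h2⟩ := h
  set m := q.natAbs
  set n := (p - m)/2 with hn
  have hp : p = 2*n + m := by omega
  rw [Rz, RS]
  refine Finset.sum_congr rfl fun l hl => ?_
  have hl' : l ≤ n := by simpa [Nat.lt_succ_iff] using hl
  rw [Zc]
  rw [show p - l = 2*n+m-l by omega, show p - 2*l = 2*(n-l)+m by omega,
    show (p + m)/2 - l = n+m-l by omega, show (p - q.natAbs)/2 = n from rfl]
  ring

lemma radial_RS' (n n' m : ℕ) :
    ∫ ρ in (0:ℝ)..1, RS n m ρ * RS n' m ρ * ρ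
      = if n = n' then 1/(2*(2*(n:ℝ)+m+1)) else 0 := by
  rcases le_total n' n with hle | hle
  · exact radial_RS n n' m hle
  · have := radial_RS n' n m hle
    rw [intervalIntegral.integral_congr (fun ρ _ => by ring :
      Set.EqOn (fun ρ => RS n m ρ * RS n' m ρ * ρ) (fun ρ => RS n' m ρ * RS n m ρ * ρ) _), this]
    rcases eq_or_ne n n' with rfl | hne
    · simp
    · rw [if_neg (Ne.symm hne), if_neg hne]

theorem stmt5 (p p' : ℕ) (q q' : ℤ) (h : Admissible p q) (h' : Admissible p' q') :
    ∫ z in Disc, Vz p q z * (starRingEnd ℂ) (Vz p' q' z)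
      = if p = p' ∧ q = q' then (π / (p + 1) : ℂ) else 0 := by
  classical
  set m := q.natAbs with hm
  set m' := q'.natAbs with hm'
  set n := (p - m)/2 with hn
  set n' := (p' - m')/2 with hn'
  have hp2 : p = 2*n + m := by have := h.1; have := h.2; omega
  have hp2' : p' = 2*n' + m' := by have := h'.1; have := h'.2; omega
  set F : ℂ → ℂ := fun z => Vz p q z * (starRingEnd ℂ) (Vz p' q' z) with hF
  set g1 : ℝ → ℝ :=
    fun r => (Set.Ioc (0:ℝ) 1).indicator (fun r => r * (Rz p q r * Rz p' q' r)) r with hg1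
  set g2 : ℝ → ℂ := fun θ => Complex.exp (((q - q' : ℤ) : ℂ) * (θ:ℝ) * Complex.I) with hg2
  have hpt : ∀ x ∈ polarCoord.target,
      x.1 • Disc.indicator F (Complex.polarCoord.symm x) = ((g1 x.1 : ℝ):ℂ) * g2 x.2 := by
    rintro ⟨r, θ⟩ hx
    rw [polarCoord_target] at hx
    obtain ⟨hr, hθ⟩ := hx
    rw [Set.mem_Ioi] at hr
    set z := Complex.polarCoord.symm (r, θ) with hz
    have hzdef : z = (r:ℂ) * (Real.cos θ + Real.sin θ * Complex.I) :=
      Complex.polarCoord_symm_apply _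
    have habs : ‖z‖ = r := by
      rw [hz, Complex.norm_polarCoord_symm]; exact abs_of_pos hr
    have harg : Complex.arg z = θ := by
      rw [hzdef, Complex.arg_real_mul _ hr, Complex.ofReal_cos, Complex.ofReal_sin,
        Complex.arg_cos_add_sin_mul_I ⟨hθ.1, hθ.2.le⟩]
    by_cases hr1 : r ≤ 1
    · have hzD : z ∈ Disc := by
        rw [Disc, Metric.mem_closedBall, dist_zero_right, habs]
        exact hr1
      rw [Set.indicator_of_mem hzD]
      have hconj : (starRingEnd ℂ) (Vz p' q' z)
          = ((Rz p' q' r : ℝ):ℂ) * Complex.exp (-((q':ℂ) * (θ:ℝ) * Complex.I)) := by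
        rw [Vz, habs, harg, map_mul, Complex.conj_ofReal, ← Complex.exp_conj]
        congr 2
        simp [map_mul, Complex.conj_ofReal, Complex.conj_I]
        try ring
      have hVal : F z = ((Rz p q r * Rz p' q' r : ℝ):ℂ) * g2 θ := by
        rw [hF]
        show Vz p q z * (starRingEnd ℂ) (Vz p' q' z) = _
        rw [hconj, Vz, habs, harg, hg2]
        rw [show ((Rz p q r : ℝ):ℂ) * Complex.exp ((q:ℂ) * (θ:ℝ) * Complex.I)
              * (((Rz p' q' r : ℝ):ℂ) * Complex.exp (-((q':ℂ) * (θ:ℝ) * Complex.I)))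
            = ((Rz p q r : ℝ):ℂ) * ((Rz p' q' r : ℝ):ℂ)
              * (Complex.exp ((q:ℂ) * (θ:ℝ) * Complex.I)
                * Complex.exp (-((q':ℂ) * (θ:ℝ) * Complex.I))) from by ring,
          ← Complex.exp_add]
        push_cast
        ring_nf
      rw [hVal]
      have hg1v : g1 r = r * (Rz p q r * Rz p' q' r) := Set.indicator_of_mem (Set.mem_Ioc.mpr ⟨hr, hr1⟩) _
      rw [hg1v, Complex.real_smul]
      push_cast
      ring
    · have hzD : z ∉ Disc := by
        rw [Disc, Metric.mem_closedBall, dist_zero_right, habs]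
        exact hr1
      rw [Set.indicator_of_notMem hzD, smul_zero]
      have hg1v : g1 r = 0 := Set.indicator_of_notMem (fun hmem => hr1 hmem.2) _
      rw [hg1v]
      simp
  have key : ∫ z in Disc, F z
      = (↑(∫ ρ in (0:ℝ)..1, RS n m ρ * RS n' m' ρ * ρ) : ℂ)
        * (if q = q' then ((2*π : ℝ):ℂ) else 0) := by
    have hDm : MeasurableSet Disc := measurableSet_closedBall
    rw [← MeasureTheory.integral_indicator hDm]
    rw [← Complex.integral_comp_polarCoord_symm (Disc.indicator F)]
    rw [setIntegral_congr_fun polarCoord.open_target.measurableSet hpt]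
    rw [polarCoord_target, MeasureTheory.Measure.volume_eq_prod,
      MeasureTheory.setIntegral_prod_mul (fun r : ℝ => ((g1 r : ℝ):ℂ)) g2 _ _]
    congr 1
    · rw [show (∫ x in Set.Ioi (0:ℝ), ((g1 x : ℝ):ℂ)) = ((∫ x in Set.Ioi (0:ℝ), g1 x : ℝ) : ℂ)
        from integral_ofReal]
      congr 1
      rw [hg1, setIntegral_indicator measurableSet_Ioc,
        Set.inter_eq_self_of_subset_right Set.Ioc_subset_Ioi_self,
        ← intervalIntegral.integral_of_le zero_le_one]
      refine intervalIntegral.integral_congr fun ρ _ => ?_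
      rw [Rz_eq_RS p q h, Rz_eq_RS p' q' h']
      show ρ * (RS n m ρ * RS n' m' ρ) = RS n m ρ * RS n' m' ρ * ρ
      ring
    · rw [angular (q - q')]
      simp [sub_eq_zero]
  rcases eq_or_ne q q' with hqq | hqq
  · have hmm : m' = m := by rw [hm', hm, hqq]
    rw [key, if_pos hqq, hmm, radial_RS' n n' m]
    have hpp : (p = p') ↔ (n = n') := by
      constructor <;> intro <;> omega
    by_cases hnn : n = n'
    · rw [if_pos hnn, if_pos ⟨hpp.mpr hnn, hqq⟩]
      have hr0 : (2*(n:ℝ)+m+1) ≠ 0 := by positivity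
      have hc0 : (2*(n:ℂ)+m+1) ≠ 0 := by
        rw [show (2*(n:ℂ)+m+1) = ((2*(n:ℝ)+m+1 : ℝ):ℂ) by push_cast; ring]
        exact Complex.ofReal_ne_zero.mpr hr0
      have hpc : ((p:ℂ)+1) = 2*(n:ℂ)+m+1 := by rw [hp2]; push_cast; ring
      rw [hpc]
      push_cast
      field_simp
    · rw [if_neg hnn, if_neg (fun hc => hnn (hpp.mp hc.1))]
      simp
  · rw [key, if_neg hqq, if_neg (fun hc => hqq hc.2), mul_zero]
end
end

section
/- For every admissible pair (p,q), the squared L² norm of the Zernike polynomial on the unit disc is ‖V_{pq}‖² = π/(p+1). -/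
open MeasureTheory Complex Real

noncomputable section

section Lemmas
open Finset Polynomial intervalIntegral




lemma alt_diff (f : ℕ → ℤ) (n : ℕ) :
    ∑ k ∈ range (n+2), (-1)^k * ((n+1).choose k : ℤ) * f k
      = ∑ k ∈ range (n+1), (-1)^k * (n.choose k : ℤ) * (f k - f (k+1)) := by
  rw [Finset.sum_range_succ' (fun k => (-1)^k * ((n+1).choose k : ℤ) * f k) (n+1)]
  have h1 : ∀ k, ((n+1).choose (k+1) : ℤ) = n.choose k + n.choose (k+1) := by
    intro k; rw [Nat.choose_succ_succ]; push_cast; ring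
  rw [Finset.sum_congr rfl (fun k _ => by rw [h1 k])]
  have expand : ∑ k ∈ range (n+1), (-1:ℤ)^(k+1) * ((n.choose k : ℤ) + n.choose (k+1)) * f (k+1)
      = (∑ k ∈ range (n+1), (-1:ℤ)^(k+1) * (n.choose k) * f (k+1))
        + ∑ k ∈ range (n+1), (-1:ℤ)^(k+1) * (n.choose (k+1)) * f (k+1) := by
    rw [← Finset.sum_add_distrib]; apply Finset.sum_congr rfl; intro k _; ring
  have shift : ∑ k ∈ range (n+1), (-1:ℤ)^(k+1) * (n.choose (k+1)) * f (k+1)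
      = (∑ k ∈ range (n+2), (-1:ℤ)^k * (n.choose k) * f k) - f 0 := by
    rw [Finset.sum_range_succ' (fun k => (-1:ℤ)^k * (n.choose k) * f k) (n+1)]
    simp
  have last : ((-1:ℤ)^(n+1) * (n.choose (n+1)) * f (n+1)) = 0 := by simp [Nat.choose_succ_self]
  have shrink : ∑ k ∈ range (n+2), (-1:ℤ)^k * (n.choose k) * f k
      = ∑ k ∈ range (n+1), (-1:ℤ)^k * (n.choose k) * f k := by
    rw [Finset.sum_range_succ, last, add_zero]
  rw [expand, shift, shrink]
  simp only [Nat.choose_zero_right, Nat.cast_one, pow_zero, one_mul, mul_one]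
  have : ∑ k ∈ range (n+1), (-1:ℤ)^k * (n.choose k) * (f k - f (k+1))
      = (∑ k ∈ range (n+1), (-1:ℤ)^k * (n.choose k) * f k)
        + ∑ k ∈ range (n+1), (-1:ℤ)^(k+1) * (n.choose k) * f (k+1) := by
    rw [← Finset.sum_add_distrib]; apply Finset.sum_congr rfl; intro k _; ring
  rw [this]; ring

lemma choose_alt : ∀ (n m j : ℕ), j ≤ n → n ≤ m →
    ∑ k ∈ range (n+1), (-1:ℤ)^k * (n.choose k) * ((m+j-k).choose j)
      = if j = n then 1 else 0 := by
  intro n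
  induction n with
  | zero =>
    intro m j hj _
    interval_cases j
    simp
  | succ n ih =>
    intro m j hj hm
    match j with
    | 0 =>
      have : ∑ k ∈ range (n+2), (-1:ℤ)^k * ((n+1).choose k) * ((m+0-k).choose 0)
          = ∑ k ∈ range (n+2), (-1:ℤ)^k * ((n+1).choose k) := by
        apply Finset.sum_congr rfl; intro k _; simp
      rw [this, Int.alternating_sum_range_choose_of_ne (Nat.succ_ne_zero n)]
      simp
    | (j'+1) =>
      rw [alt_diff (fun k => ((m+(j'+1)-k).choose (j'+1) : ℤ)) n]
      have key : ∀ k ∈ range (n+1),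
          (-1:ℤ)^k * (n.choose k) * (((m+(j'+1)-k).choose (j'+1) : ℤ) - ((m+(j'+1)-(k+1)).choose (j'+1) : ℤ))
          = (-1:ℤ)^k * (n.choose k) * ((m+j'-k).choose j') := by
        intro k hk
        have hk' : k ≤ n := Nat.lt_succ_iff.mp (Finset.mem_range.mp hk)
        have h1 : m + (j'+1) - k = (m + j' - k) + 1 := by omega
        have h2 : m + (j'+1) - (k+1) = m + j' - k := by omega
        rw [h1, h2, Nat.choose_succ_succ]
        push_cast; ring
      rw [Finset.sum_congr rfl key, ih m j' (by omega) (by omega)]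
      by_cases hjn : j' = n <;> simp [hjn]




lemma betaNat : ∀ (b a : ℕ), ∫ x in (0:ℝ)..1, x^a * (1-x)^b
    = (Nat.factorial a * Nat.factorial b : ℝ) / (Nat.factorial (a+b+1)) := by
  intro b
  induction b with
  | zero =>
    intro a
    simp only [pow_zero, mul_one, integral_pow]
    rw [Nat.factorial_succ]
    push_cast
    field_simp
    simp
  | succ b ih =>
    intro a
    have hu : ∀ x ∈ Set.uIcc (0:ℝ) 1, HasDerivAt (fun x : ℝ => (1-x)^(b+1))
        (-( (b+1) * (1-x)^b)) x := by
      intro x _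
      have h1 : HasDerivAt (fun x : ℝ => 1 - x) (-1) x := by
        simpa using (hasDerivAt_id' x).const_sub (1:ℝ)
      have := h1.pow (b+1)
      simp [mul_comm, mul_assoc] at this; exact this
    have hv : ∀ x ∈ Set.uIcc (0:ℝ) 1, HasDerivAt (fun x : ℝ => x^(a+1)/(a+1))
        (x^a) x := by
      intro x _
      have h1 : HasDerivAt (fun x : ℝ => x^(a+1)) ((a+1) * x^a) x := by
        simpa using (hasDerivAt_pow (a+1) x)
      have := h1.div_const ((a:ℝ)+1)
      have hne : ((a:ℝ)+1) ≠ 0 := by positivity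
      simpa [mul_comm, mul_div_assoc, div_self hne] using this
    have hiu : IntervalIntegrable (fun x : ℝ => -((b+1) * (1-x)^b)) MeasureTheory.volume 0 1 :=
      (Continuous.intervalIntegrable (by continuity) _ _)
    have hiv : IntervalIntegrable (fun x : ℝ => x^a) MeasureTheory.volume 0 1 :=
      (Continuous.intervalIntegrable (by continuity) _ _)
    have parts := intervalIntegral.integral_mul_deriv_eq_deriv_mul hu hv hiu hiv
    have lhs_eq : ∫ x in (0:ℝ)..1, x^a * (1-x)^(b+1)
        = ∫ x in (0:ℝ)..1, (1-x)^(b+1) * x^a := by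
      apply intervalIntegral.integral_congr; intro x _; ring
    rw [lhs_eq, parts]
    have : ∫ x in (0:ℝ)..1, -((b+1) * (1-x)^b) * (x^(a+1)/(a+1))
        = (-((b:ℝ)+1)/((a:ℝ)+1)) * ∫ x in (0:ℝ)..1, x^(a+1) * (1-x)^b := by
      rw [← intervalIntegral.integral_const_mul]
      apply intervalIntegral.integral_congr; intro x _
      field_simp
    rw [this, ih (a+1)]
    norm_num
    have h2 : a + 1 + b + 1 = a + (b+1) + 1 := by omega
    rw [h2]
    have e1 : (Nat.factorial (a+1) : ℝ) = (a+1) * Nat.factorial a := by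
      rw [Nat.factorial_succ]; push_cast; ring
    have e2 : (Nat.factorial (b+1) : ℝ) = (b+1) * Nat.factorial b := by
      rw [Nat.factorial_succ]; push_cast; ring
    have hne1 : ((a:ℝ)+1) ≠ 0 := by positivity
    have hne3 : (Nat.factorial (a+(b+1)+1) : ℝ) ≠ 0 := by
      exact_mod_cast Nat.factorial_ne_zero _
    rw [e1, e2]
    field_simp
    ring




lemma expandF (n m : ℕ) :
    ((X:ℝ[X])^m * (X - C 1)^n)
      = ∑ l ∈ range (n+1), Polynomial.C ((-1:ℝ)^l * (n.choose l)) * X^(m+n-l) := by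
  rw [sub_pow, Finset.mul_sum, ← Finset.sum_range_reflect]
  apply Finset.sum_congr rfl
  intro l hl
  have hl' : l ≤ n := Nat.lt_succ_iff.mp (Finset.mem_range.mp hl)
  simp only [Nat.add_sub_cancel, map_one, one_pow, mul_one]
  rw [Nat.choose_symm hl']
  have hsign : (-1 : ℝ[X])^(n - l + n) = (-1)^l := by
    rw [show n - l + n = l + 2*(n-l) by omega, pow_add, pow_mul, neg_one_sq, one_pow, mul_one]
  rw [hsign, map_mul, map_pow, map_neg, map_one, C_eq_natCast,
    show m + n - l = m + (n - l) by omega, pow_add]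
  ring

lemma polyid (n m : ℕ) (h : n ≤ m) (t : ℝ) :
    ∑ l ∈ range (n+1), (-1:ℝ)^l * (n.choose l) * ((m+n-l).descFactorial n) * t^(m-l)
      = ∑ k ∈ range (n+1),
          (n.choose k : ℝ) * (m.descFactorial (n-k)) * (n.descFactorial k)
            * t^(m-(n-k)) * (t-1)^(n-k) := by
  have e1 : (Polynomial.derivative^[n] ((X:ℝ[X])^m * (X - C 1)^n)).eval t
      = ∑ l ∈ range (n+1), (-1:ℝ)^l * (n.choose l) * ((m+n-l).descFactorial n) * t^(m-l) := by
    rw [expandF n m, Polynomial.iterate_derivative_sum, Polynomial.eval_finset_sum]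
    apply Finset.sum_congr rfl
    intro l hl
    have hl' : l ≤ n := Nat.lt_succ_iff.mp (Finset.mem_range.mp hl)
    rw [Polynomial.iterate_derivative_C_mul, Polynomial.iterate_derivative_X_pow_eq_C_mul]
    rw [show m + n - l - n = m - l by omega]
    simp only [eval_mul, eval_C, eval_pow, eval_X]
    ring
  have e2 : (Polynomial.derivative^[n] ((X:ℝ[X])^m * (X - C 1)^n)).eval t
      = ∑ k ∈ range (n+1),
          (n.choose k : ℝ) * (m.descFactorial (n-k)) * (n.descFactorial k)
            * t^(m-(n-k)) * (t-1)^(n-k) := by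
    rw [Polynomial.iterate_derivative_mul, Polynomial.eval_finset_sum]
    apply Finset.sum_congr rfl
    intro k hk
    rw [Polynomial.iterate_derivative_X_pow_eq_C_mul, Polynomial.iterate_derivative_X_sub_pow]
    simp only [eval_smul, eval_mul, eval_C, eval_pow, eval_X, eval_sub, eval_one, eval_natCast,
      smul_eq_mul, nsmul_eq_mul]
    push_cast
    ring
  rw [← e1, e2]

lemma K (n m j : ℕ) (hj : j ≤ n) (hnm : n ≤ m) :
    ∑ l ∈ range (n+1), ((-1:ℝ)^l * (n.choose l) * ((m+n-l).descFactorial n)) / ((m+j+1-l : ℕ) : ℝ)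
      = if j = n then ((m.factorial * n.factorial * n.factorial : ℕ) : ℝ) / ((m+n+1).factorial : ℕ)
        else 0 := by
  -- Step A: write as an integral
  have stepA : ∑ l ∈ range (n+1),
        ((-1:ℝ)^l * (n.choose l) * ((m+n-l).descFactorial n)) / ((m+j+1-l : ℕ) : ℝ)
      = ∫ t in (0:ℝ)..1, ∑ l ∈ range (n+1),
          t^j * ((-1:ℝ)^l * (n.choose l) * ((m+n-l).descFactorial n) * t^(m-l)) := by
    rw [intervalIntegral.integral_finset_sum
      (fun l _ => (Continuous.intervalIntegrable (by continuity) _ _))]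
    apply Finset.sum_congr rfl
    intro l hl
    have hl' : l ≤ n := Nat.lt_succ_iff.mp (Finset.mem_range.mp hl)
    have : ∀ t : ℝ, t^j * ((-1:ℝ)^l * (n.choose l) * ((m+n-l).descFactorial n) * t^(m-l))
        = ((-1:ℝ)^l * (n.choose l) * ((m+n-l).descFactorial n)) * t^(j+(m-l)) := by
      intro t; rw [pow_add]; ring
    rw [intervalIntegral.integral_congr (fun t _ => this t),
      intervalIntegral.integral_const_mul, integral_pow]
    rw [zero_pow (Nat.succ_ne_zero _), one_pow, sub_zero]
    have hcast : ((m + j + 1 - l : ℕ) : ℝ) = ((j + (m - l) : ℕ) :ℝ) + 1 := by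
      rw [show m + j + 1 - l = j + (m - l) + 1 by omega]; push_cast; ring
    rw [hcast]; ring
  rw [stepA]
  -- Step B: use polyid inside
  have stepB : ∀ t : ℝ, ∑ l ∈ range (n+1),
        t^j * ((-1:ℝ)^l * (n.choose l) * ((m+n-l).descFactorial n) * t^(m-l))
      = ∑ k ∈ range (n+1), t^j * ((n.choose k : ℝ) * (m.descFactorial (n-k)) * (n.descFactorial k)
            * t^(m-(n-k)) * (t-1)^(n-k)) := by
    intro t
    rw [← Finset.mul_sum, ← Finset.mul_sum, polyid n m hnm t]
  rw [intervalIntegral.integral_congr (fun t _ => stepB t)]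
  -- Step C: integrate each term via betaNat
  rw [intervalIntegral.integral_finset_sum
      (fun k _ => (Continuous.intervalIntegrable (by continuity) _ _))]
  have stepC : ∀ k ∈ range (n+1),
      (∫ t in (0:ℝ)..1, t^j * ((n.choose k : ℝ) * (m.descFactorial (n-k)) * (n.descFactorial k)
            * t^(m-(n-k)) * (t-1)^(n-k)))
      = ((n.choose k : ℝ) * (m.descFactorial (n-k)) * (n.descFactorial k)) * (-1)^(n-k)
          * ((j+(m-(n-k))).factorial * (n-k).factorial) / ((m+j+1).factorial) := by
    intro k hk
    have hk' : k ≤ n := Nat.lt_succ_iff.mp (Finset.mem_range.mp hk)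
    have expand : ∀ t : ℝ, t^j * ((n.choose k : ℝ) * (m.descFactorial (n-k)) * (n.descFactorial k)
            * t^(m-(n-k)) * (t-1)^(n-k))
        = ((n.choose k : ℝ) * (m.descFactorial (n-k)) * (n.descFactorial k)) * (-1)^(n-k)
            * (t^(j+(m-(n-k))) * (1-t)^(n-k)) := by
      intro t
      have h1 : (t-1)^(n-k) = (-1)^(n-k) * (1-t)^(n-k) := by
        rw [← neg_one_mul, ← mul_pow]; ring_nf
      rw [h1, pow_add]; ring
    rw [intervalIntegral.integral_congr (fun t _ => expand t),
      intervalIntegral.integral_const_mul, betaNat]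
    have harg : j + (m - (n-k)) + (n-k) + 1 = m + j + 1 := by omega
    rw [harg]
    ring
  rw [Finset.sum_congr rfl stepC]
  -- Step D: reflect and use choose_alt
  rw [← Finset.sum_range_reflect]
  simp only [Nat.add_sub_cancel]
  have stepD : ∀ k ∈ range (n+1),
      ((n.choose (n-k) : ℝ) * (m.descFactorial (n-(n-k))) * (n.descFactorial (n-k))) * (-1)^(n-(n-k))
          * ((j+(m-(n-(n-k)))).factorial * (n-(n-k)).factorial) / ((m+j+1).factorial)
      = (((m.factorial * n.factorial * j.factorial : ℕ) : ℝ) / ((m+j+1).factorial))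
          * ((-1:ℝ)^k * (n.choose k) * ((m+j-k).choose j)) := by
    intro k hk
    have hk' : k ≤ n := Nat.lt_succ_iff.mp (Finset.mem_range.mp hk)
    have h1 : n - (n - k) = k := by omega
    rw [h1, Nat.choose_symm hk']
    -- descFactorial/factorial conversions
    have e1 : (m.descFactorial k : ℝ) * (m-k).factorial = m.factorial := by
      rw [← Nat.cast_mul, mul_comm, Nat.factorial_mul_descFactorial (by omega)]
    have e2 : (n.descFactorial (n-k) : ℝ) * k.factorial = n.factorial := by
      have := Nat.factorial_mul_descFactorial (show n - k ≤ n by omega)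
      rw [show n - (n-k) = k by omega] at this
      rw [← Nat.cast_mul, mul_comm, this]
    have e3 : ((m+j-k).choose j : ℝ) * j.factorial * (m-k).factorial = (m+j-k).factorial := by
      have := Nat.choose_mul_factorial_mul_factorial (show j ≤ m+j-k by omega)
      rw [show m + j - k - j = m - k by omega] at this
      exact_mod_cast this
    have e4 : j + (m - k) = m + j - k := by omega
    rw [e4]
    have hfne : ∀ N : ℕ, (N.factorial : ℝ) ≠ 0 := fun N => Nat.cast_ne_zero.mpr (Nat.factorial_ne_zero N)
    field_simp
    push_cast
    rw [← e1, ← e2, ← e3]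
    ring
  rw [Finset.sum_congr rfl stepD, ← Finset.mul_sum]
  have hcast : ∑ k ∈ range (n+1), ((-1:ℝ)^k * (n.choose k) * ((m+j-k).choose j))
      = if j = n then 1 else 0 := by
    have h2 := congrArg (fun z : ℤ => (z : ℝ)) (choose_alt n m j hj hnm)
    push_cast at h2
    rw [h2]
  rw [hcast]
  by_cases hjn : j = n
  · subst hjn; simp
  · simp [hjn]

lemma radial_reduce (g : ℝ → ℝ) :
    ∫ z in Disc, g ‖z‖ = 2 * π * ∫ y in Set.Ioc (0:ℝ) 1, y * g y := by
  classical
  set f : ℝ → ℝ := Set.indicator (Set.Icc 0 1) g with hf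
  have key : ∀ z : ℂ, Set.indicator Disc (fun z => g ‖z‖) z = f ‖z‖ := by
    intro z
    rw [hf]
    by_cases hz : z ∈ Disc
    · rw [Set.indicator_of_mem hz]
      have : ‖z‖ ∈ Set.Icc (0:ℝ) 1 := by
        constructor
        · exact norm_nonneg z
        · simpa [Disc, mem_closedBall_zero_iff] using hz
      rw [Set.indicator_of_mem this]
    · rw [Set.indicator_of_notMem hz]
      have : ‖z‖ ∉ Set.Icc (0:ℝ) 1 := by
        intro hmem
        exact hz (by simpa [Disc, mem_closedBall_zero_iff] using hmem.2)
      rw [Set.indicator_of_notMem this]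
  have hD : MeasurableSet Disc := Metric.isClosed_closedBall.measurableSet
  have h1 : ∫ z in Disc, g ‖z‖ = ∫ z : ℂ, f ‖z‖ := by
    rw [← MeasureTheory.integral_indicator hD]
    exact integral_congr_ae (Filter.Eventually.of_forall key)
  rw [h1, MeasureTheory.integral_fun_norm_addHaar volume f]
  have hdim : Module.finrank ℝ ℂ = 2 := Complex.finrank_real_complex
  rw [hdim]
  have hvol : volume.real (Metric.ball (0:ℂ) 1) = π := by
    rw [measureReal_def, Complex.volume_ball]
    simp [ENNReal.toReal_mul]
  rw [hvol]
  have h2 : ∫ y in Set.Ioi (0:ℝ), y ^ (2-1) • f y = ∫ y in Set.Ioc (0:ℝ) 1, y * g y := by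
    have : ∀ y : ℝ, y ^ (2-1) • f y = Set.indicator (Set.Icc 0 1) (fun y => y * g y) y := by
      intro y
      rw [hf]
      by_cases hy : y ∈ Set.Icc (0:ℝ) 1
      · rw [Set.indicator_of_mem hy, Set.indicator_of_mem hy]; simp
      · rw [Set.indicator_of_notMem hy, Set.indicator_of_notMem hy, smul_zero]
    rw [MeasureTheory.setIntegral_congr_fun measurableSet_Ioi (fun y _ => this y)]
    rw [MeasureTheory.setIntegral_indicator measurableSet_Icc]
    have hset : Set.Ioi (0:ℝ) ∩ Set.Icc 0 1 = Set.Ioc 0 1 := by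
      ext y
      simp only [Set.mem_inter_iff, Set.mem_Ioi, Set.mem_Icc, Set.mem_Ioc]
      constructor
      · rintro ⟨ha, _, hc⟩; exact ⟨ha, hc⟩
      · rintro ⟨ha, hb⟩; exact ⟨ha, le_of_lt ha, hb⟩
    rw [hset]
  rw [h2]
  show (2:ℕ) • (π • (∫ y in Set.Ioc (0:ℝ) 1, y * g y)) = _
  rw [nsmul_eq_mul, smul_eq_mul]
  push_cast
  ring

end Lemmas

theorem stmt6 (p : ℕ) (q : ℤ) (h : Admissible p q) :
    ∫ z in Disc, ‖Vz p q z‖ ^ 2 = π / (p + 1) := by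
  classical
  obtain ⟨h1, h2⟩ := h
  set a := q.natAbs with ha
  set n := (p - a)/2 with hn
  set m := (p + a)/2 with hm
  have hmn : m + n = p := by omega
  have hnm : n ≤ m := by omega
  set c : ℕ → ℝ := fun l => (-1:ℝ)^l * ((p-l).factorial : ℝ)
      / ((l.factorial : ℝ) * ((m-l).factorial : ℝ) * ((n-l).factorial : ℝ)) with hc
  -- Step 1: |Vz|² = Rz²
  have hV : ∀ z : ℂ, ‖Vz p q z‖ ^ 2 = (Rz p q ‖z‖)^2 := by
    intro z
    unfold Vz
    rw [norm_mul]
    have habs1 : ‖Complex.exp ((q:ℂ) * (Complex.arg z) * Complex.I)‖ = 1 := by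
      rw [Complex.norm_exp]
      have : ((q:ℂ) * (Complex.arg z) * Complex.I).re = 0 := by
        simp [Complex.mul_re, Complex.mul_im]
      rw [this, Real.exp_zero]
    rw [habs1, mul_one, Complex.norm_real, Real.norm_eq_abs, _root_.sq_abs]
  -- Step 2: Rz as a sum with coefficients c
  have hRz : ∀ t : ℝ, Rz p q t = ∑ l ∈ Finset.range (n+1), c l * t^(p - 2*l) := by
    intro t
    unfold Rz
    rw [← ha, ← hn, ← hm]
    apply Finset.sum_congr rfl
    intro l _
    rw [hc]
    ring
  -- Step 3: reduce to radial integral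
  have hstep3 : ∫ z in Disc, ‖Vz p q z‖ ^ 2
      = 2 * π * ∫ y in Set.Ioc (0:ℝ) 1, y * (Rz p q y)^2 := by
    rw [← radial_reduce (fun t => (Rz p q t)^2)]
    exact setIntegral_congr_ae (Metric.isClosed_closedBall.measurableSet)
      (Filter.Eventually.of_forall (fun z _ => hV z))
  rw [hstep3]
  -- Step 4: compute the radial integral
  have hI : ∫ y in Set.Ioc (0:ℝ) 1, y * (Rz p q y)^2 = 1/(2*((p:ℝ)+1)) := by
    rw [← intervalIntegral.integral_of_le (by norm_num : (0:ℝ) ≤ 1)]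
    have expand : ∀ y : ℝ, y * (Rz p q y)^2
        = ∑ l' ∈ Finset.range (n+1), ∑ l ∈ Finset.range (n+1),
            (c l' * c l) * y^((p-2*l') + (p-2*l) + 1) := by
      intro y
      rw [hRz y, sq, Finset.sum_mul_sum, Finset.mul_sum]
      apply Finset.sum_congr rfl
      intro l' _
      rw [Finset.mul_sum]
      apply Finset.sum_congr rfl
      intro l _
      rw [pow_add, pow_add, pow_one]
      ring
    rw [intervalIntegral.integral_congr (fun y _ => expand y)]
    rw [intervalIntegral.integral_finset_sum
      (fun l' _ => (Continuous.intervalIntegrable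
        (by fun_prop) _ _))]
    have hterm : ∀ l' ∈ Finset.range (n+1),
        (∫ y in (0:ℝ)..1, ∑ l ∈ Finset.range (n+1), (c l' * c l) * y^((p-2*l') + (p-2*l) + 1))
        = c l' * (1/(2 * (n.factorial : ℝ)))
            * (if l' = 0 then ((m.factorial * n.factorial * n.factorial : ℕ) : ℝ)
                / (((m+n+1).factorial : ℕ) : ℝ) else 0) := by
      intro l' hl'
      have hl'n : l' ≤ n := Nat.lt_succ_iff.mp (Finset.mem_range.mp hl')
      set j := n - l' with hj
      rw [intervalIntegral.integral_finset_sum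
        (fun l _ => (Continuous.intervalIntegrable (by fun_prop) _ _))]
      have hper : ∀ l ∈ Finset.range (n+1),
          (∫ y in (0:ℝ)..1, (c l' * c l) * y^((p-2*l') + (p-2*l) + 1))
          = (c l' / (2 * (n.factorial : ℝ)))
              * (((-1:ℝ)^l * (n.choose l) * ((m+n-l).descFactorial n)) / ((m+j+1-l : ℕ) : ℝ)) := by
        intro l hl
        have hln : l ≤ n := Nat.lt_succ_iff.mp (Finset.mem_range.mp hl)
        rw [intervalIntegral.integral_const_mul, _root_.integral_pow]
        rw [zero_pow (Nat.succ_ne_zero _), one_pow, sub_zero]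
        have hden : (((p-2*l') + (p-2*l) + 1 : ℕ) : ℝ) + 1 = 2 * ((m+j+1-l : ℕ) : ℝ) := by
          have : (p-2*l') + (p-2*l) + 1 + 1 = 2 * (m+j+1-l) := by omega
          have := congrArg (fun x : ℕ => (x : ℝ)) this
          push_cast at this ⊢
          linarith
        have hcl : c l * (n.factorial : ℝ)
            = (-1:ℝ)^l * (n.choose l) * ((m+n-l).descFactorial n) := by
          have e1 : ((n.choose l : ℕ) : ℝ) * (l.factorial : ℝ) * ((n-l).factorial : ℝ)
              = (n.factorial : ℝ) := by
            exact_mod_cast congrArg (fun x : ℕ => (x:ℝ))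
              (Nat.choose_mul_factorial_mul_factorial hln)
          have e2 : (((m+n-l).descFactorial n : ℕ) : ℝ) * ((m-l).factorial : ℝ)
              = ((m+n-l).factorial : ℝ) := by
            have := Nat.factorial_mul_descFactorial (show n ≤ m+n-l by omega)
            rw [show m+n-l-n = m-l by omega] at this
            rw [mul_comm]
            exact_mod_cast congrArg (fun x : ℕ => (x:ℝ)) this
          simp only [hc]
          have hp : p - l = m+n-l := by omega
          rw [hp]
          have hfne : ∀ N : ℕ, (N.factorial : ℝ) ≠ 0 :=
            fun N => Nat.cast_ne_zero.mpr (Nat.factorial_ne_zero N)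
          field_simp
          rw [← e1, ← e2]
          ring
        have hF : (n.factorial : ℝ) ≠ 0 := Nat.cast_ne_zero.mpr (Nat.factorial_ne_zero n)
        rw [hden]
        rw [show c l' * c l = (c l' / (n.factorial : ℝ)) * (c l * (n.factorial : ℝ)) by
          field_simp]
        rw [hcl]
        ring
      rw [Finset.sum_congr rfl hper, ← Finset.mul_sum]
      rw [K n m j (by omega) hnm]
      have hiff : (if j = n then ((m.factorial * n.factorial * n.factorial : ℕ) : ℝ)
            / (((m+n+1).factorial : ℕ) : ℝ) else 0)
          = (if l' = 0 then ((m.factorial * n.factorial * n.factorial : ℕ) : ℝ)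
            / (((m+n+1).factorial : ℕ) : ℝ) else 0) := by
        by_cases hl0 : l' = 0
        · rw [if_pos hl0, if_pos (show j = n by omega)]
        · rw [if_neg hl0, if_neg (show ¬ j = n by omega)]
      rw [hiff]
      ring
    rw [Finset.sum_congr rfl hterm]
    rw [Finset.sum_eq_single 0 (fun b _ hb => by rw [if_neg hb, mul_zero])
      (fun habs => absurd (Finset.mem_range.mpr (Nat.succ_pos n)) habs)]
    rw [if_pos rfl]
    have hc0 : c 0 = (p.factorial : ℝ)/((m.factorial:ℝ)*(n.factorial:ℝ)) := by
      simp [hc]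
    rw [hc0, show m + n + 1 = p + 1 by omega, Nat.factorial_succ]
    have hfne : ∀ N : ℕ, (N.factorial : ℝ) ≠ 0 :=
      fun N => Nat.cast_ne_zero.mpr (Nat.factorial_ne_zero N)
    have hp1 : ((p:ℝ)+1) ≠ 0 := by positivity
    push_cast
    field_simp
  rw [hI]
  have : ((p:ℝ)+1) ≠ 0 := by positivity
  field_simp
end
end
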